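/- Let K = [0, 1], lambda(t) = 4 + 32 t for 0 <= t <= 1/2 and lambda(t) = 4 + 32(1 - t) for 1/2 < t <= 1, and f(t) = cos(4 pi lambda(t) t) + 2 sin(4 pi t). Then the best uniform approximation of f on [0,1] from the span of {1, cos(4 pi t), sin(4 pi t)} is p(t) = 2 sin(4 pi t); that is, ||f - p||_{C[0,1]} <= ||f - q||_{C[0,1]} for all q in the span. -/
import Mathlib


open Real

private lemma cos_pi_mul_even' (n : ℤ) (x : ℝ) (hx : x = 2 * n) : Real.cos (π * x) = 1 := by
  have h : π * x = n * (2 * π) := by rw [hx]; ring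
  rw [h, Real.cos_int_mul_two_pi]

private lemma cos_pi_mul_odd' (n : ℤ) (x : ℝ) (hx : x = 2 * n + 1) : Real.cos (π * x) = -1 := by
  have h : π * x = π + n * (2 * π) := by rw [hx]; ring
  rw [h, Real.cos_add_int_mul_two_pi, Real.cos_pi]

private lemma final_contradiction (a b c X1 Y1 X3 Y3 : ℝ)
    (hP0 : 0 < a + b) (hP1 : 0 < a + c) (hP2 : 0 < a - b) (hP3 : 0 < a - c)
    (hX1 : 0 < X1) (hY1 : 0 < Y1) (hX3 : X3 < 0) (hY3 : Y3 < 0)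
    (hu1 : X1^2 + Y1^2 = 1) (hu3 : X3^2 + Y3^2 = 1)
    (hN1 : a + b*X1 + c*Y1 < 0) (hN3 : a + b*X3 + c*Y3 < 0) : False := by
  have ha0 : 0 < a := by linarith
  have hb2 : b^2 < a^2 := by nlinarith
  have hc2 : c^2 < a^2 := by nlinarith
  have hLsum : b*(X1+X3) + c*(Y1+Y3) < -2*a := by nlinarith
  have hL2 : 4*a^2 < (b*(X1+X3) + c*(Y1+Y3))^2 := by nlinarith
  have hSsum : (X1+X3)^2 + (Y1+Y3)^2 < 2 := by
    nlinarith [mul_neg_of_pos_of_neg hX1 hX3, mul_neg_of_pos_of_neg hY1 hY3]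
  have hCS : (b*(X1+X3) + c*(Y1+Y3))^2 ≤ (b^2 + c^2) * ((X1+X3)^2 + (Y1+Y3)^2) := by
    nlinarith [sq_nonneg (b*(Y1+Y3) - c*(X1+X3))]
  nlinarith [sq_nonneg (X1+X3), sq_nonneg (Y1+Y3), sq_nonneg b, sq_nonneg c]

theorem nonstationary_signal_best_approx
    (lam : ℝ → ℝ)
    (hlam : ∀ t : ℝ, lam t = if t ≤ 1 / 2 then 4 + 32 * t else 4 + 32 * (1 - t))
    (f : ℝ → ℝ)
    (hf : ∀ t : ℝ, f t = Real.cos (4 * π * lam t * t) + 2 * Real.sin (4 * π * t))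
    (g : Fin 3 → ℝ → ℝ)
    (hg : g = ![fun _ => (1 : ℝ), fun t => Real.cos (4 * π * t), fun t => Real.sin (4 * π * t)])
    (p : ℝ → ℝ) (hp : ∀ t, p t = 2 * Real.sin (4 * π * t)) :
    ∀ q ∈ Submodule.span ℝ (Set.range g),
      (⨆ t : Set.Icc (0 : ℝ) 1, |f t - p t|) ≤ ⨆ t : Set.Icc (0 : ℝ) 1, |f t - q t| := by
  intro q hq
  haveI : Nonempty (Set.Icc (0:ℝ) 1) := ⟨⟨0, by norm_num⟩⟩
  -- Step 1: the left sup is at most 1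
  have hsup1 : (⨆ t : Set.Icc (0:ℝ) 1, |f (t:ℝ) - p (t:ℝ)|) ≤ 1 := by
    apply ciSup_le
    intro t
    have harg : f (t:ℝ) - p (t:ℝ) = Real.cos (4 * π * lam t * t) := by
      rw [hf, hp]; ring
    rw [harg]
    exact Real.abs_cos_le_one _
  refine hsup1.trans ?_
  -- Step 2: coefficients of q
  obtain ⟨co, hco⟩ := (Submodule.mem_span_range_iff_exists_fun ℝ).mp hq
  have hq' : ∀ t : ℝ, q t = co 0 + co 1 * Real.cos (4 * π * t) + co 2 * Real.sin (4 * π * t) := by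
    intro t
    rw [← hco]
    simp [hg, Fin.sum_univ_three]
  -- Step 3: continuity and boundedness
  have hlam_eq : lam = fun t => if t ≤ 1/2 then 4 + 32*t else 4 + 32*(1-t) := funext hlam
  have hclam : Continuous lam := by
    rw [hlam_eq]
    apply Continuous.if_le
    · exact continuous_const.add (continuous_const.mul continuous_id)
    · exact continuous_const.add (continuous_const.mul (continuous_const.sub continuous_id))
    · exact continuous_id
    · exact continuous_const
    · intro x hx; rw [hx]; norm_num
  have hcf : Continuous f := by
    have : f = fun t => Real.cos (4 * π * lam t * t) + 2 * Real.sin (4 * π * t) := funext hf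
    rw [this]
    exact (Real.continuous_cos.comp (((continuous_const.mul hclam).mul continuous_id))).add
      (continuous_const.mul (Real.continuous_sin.comp (continuous_const.mul continuous_id)))
  have hcq : Continuous q := by
    have : q = fun t => co 0 + co 1 * Real.cos (4 * π * t) + co 2 * Real.sin (4 * π * t) :=
      funext hq'
    rw [this]
    exact (continuous_const.add (continuous_const.mul
      (Real.continuous_cos.comp (continuous_const.mul continuous_id)))).add
      (continuous_const.mul (Real.continuous_sin.comp (continuous_const.mul continuous_id)))
  have hbdd : BddAbove (Set.range fun t : Set.Icc (0:ℝ) 1 => |f (t:ℝ) - q (t:ℝ)|) := by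
    have hcc : Continuous fun t : ℝ => |f t - q t| := (hcf.sub hcq).abs
    have h := (isCompact_Icc (a := (0:ℝ)) (b := 1)).bddAbove_image hcc.continuousOn
    rwa [Set.image_eq_range] at h
  have key : ∀ t : ℝ, t ∈ Set.Icc (0:ℝ) 1 →
      |f t - q t| ≤ ⨆ t : Set.Icc (0:ℝ) 1, |f (t:ℝ) - q (t:ℝ)| := by
    intro t ht
    exact le_ciSup hbdd ⟨t, ht⟩
  -- Step 4: assume the right sup < 1 and derive a contradiction
  by_contra hcon
  push_neg at hcon
  set S := ⨆ t : Set.Icc (0:ℝ) 1, |f (t:ℝ) - q (t:ℝ)| with hS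
  -- abbreviations for the coefficients of r = q - p
  set a := co 0 with ha_def
  set b := co 1 with hb_def
  set c := co 2 - 2 with hc_def
  have hr : ∀ t : ℝ, q t - p t = a + b * Real.cos (4 * π * t) + c * Real.sin (4 * π * t) := by
    intro t
    rw [hq', hp, ha_def, hb_def, hc_def]; ring
  -- evaluation of f - p on the left half
  have hfp : ∀ t : ℝ, t ≤ 1/2 → f t - p t = Real.cos (π * (16*t + 128*t^2)) := by
    intro t ht
    have harg : 4 * π * (4 + 32*t) * t = π * (16*t + 128*t^2) := by ring
    rw [hf, hp, hlam t, if_pos ht, harg]; ring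
  -- positivity of r at the four quadrant points
  have hposgen : ∀ t : ℝ, t ∈ Set.Icc (0:ℝ) 1 → f t - p t = 1 → 0 < q t - p t := by
    intro t ht h1
    have h2 := key t ht
    have h3 : |f t - q t| < 1 := lt_of_le_of_lt h2 hcon
    have h4 := abs_lt.mp h3
    have : q t - p t = (f t - p t) - (f t - q t) := by ring
    rw [this, h1]; linarith
  have hneggen : ∀ t : ℝ, t ∈ Set.Icc (0:ℝ) 1 → f t - p t = -1 → q t - p t < 0 := by
    intro t ht h1
    have h2 := key t ht
    have h3 : |f t - q t| < 1 := lt_of_le_of_lt h2 hcon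
    have h4 := abs_lt.mp h3
    have : q t - p t = (f t - p t) - (f t - q t) := by ring
    rw [this, h1]; linarith
  have hpi := Real.pi_pos
  -- f - p = 1 at t = 0, 1/8, 1/4, 3/8
  have e0 : f 0 - p 0 = 1 := by
    rw [hfp 0 (by norm_num)]
    exact cos_pi_mul_even' 0 _ (by norm_num)
  have e1 : f (1/8) - p (1/8) = 1 := by
    rw [hfp (1/8) (by norm_num)]
    exact cos_pi_mul_even' 2 _ (by norm_num)
  have e2 : f (1/4) - p (1/4) = 1 := by
    rw [hfp (1/4) (by norm_num)]
    exact cos_pi_mul_even' 6 _ (by norm_num)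
  have e3 : f (3/8) - p (3/8) = 1 := by
    rw [hfp (3/8) (by norm_num)]
    exact cos_pi_mul_even' 12 _ (by norm_num)
  -- the four resulting linear inequalities
  have hP0 : 0 < a + b := by
    have h := hposgen 0 (by norm_num) e0
    rw [hr 0] at h
    simpa using h
  have hP1 : 0 < a + c := by
    have h := hposgen (1/8) (by constructor <;> norm_num) e1
    rw [hr (1/8)] at h
    have harg : 4 * π * (1/8 : ℝ) = π / 2 := by ring
    rw [harg, Real.cos_pi_div_two, Real.sin_pi_div_two] at h
    linarith
  have hP2 : 0 < a - b := by
    have h := hposgen (1/4) (by constructor <;> norm_num) e2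
    rw [hr (1/4)] at h
    have harg : 4 * π * (1/4 : ℝ) = π := by ring
    rw [harg, Real.cos_pi, Real.sin_pi] at h
    linarith
  have hP3 : 0 < a - c := by
    have h := hposgen (3/8) (by constructor <;> norm_num) e3
    rw [hr (3/8)] at h
    have harg : 4 * π * (3/8 : ℝ) = π/2 + π := by ring
    rw [harg, Real.cos_add_pi, Real.sin_add_pi, Real.cos_pi_div_two, Real.sin_pi_div_two] at h
    linarith
  -- IVT: negative points s₁ ∈ (0, 1/8) and s₃ ∈ (1/4, 3/8)
  have hψ : Continuous fun t : ℝ => 16*t + 128*t^2 :=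
    (continuous_const.mul continuous_id).add (continuous_const.mul (continuous_pow 2))
  have ivt1 := intermediate_value_Ioo (by norm_num : (0:ℝ) ≤ 1/8) hψ.continuousOn
  have h1mem : (1:ℝ) ∈ Set.Ioo (16*(0:ℝ) + 128*(0:ℝ)^2) (16*(1/8:ℝ) + 128*(1/8:ℝ)^2) := by
    norm_num
  obtain ⟨s₁, hs₁mem, hψs₁⟩ := ivt1 h1mem
  simp only at hψs₁
  have ivt3 := intermediate_value_Ioo (by norm_num : (1/4:ℝ) ≤ 3/8) hψ.continuousOn
  have h3mem : (13:ℝ) ∈ Set.Ioo (16*(1/4:ℝ) + 128*(1/4:ℝ)^2) (16*(3/8:ℝ) + 128*(3/8:ℝ)^2) := by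
    norm_num
  obtain ⟨s₃, hs₃mem, hψs₃⟩ := ivt3 h3mem
  simp only at hψs₃
  obtain ⟨hs₁l, hs₁r⟩ := hs₁mem
  obtain ⟨hs₃l, hs₃r⟩ := hs₃mem
  -- f - p = -1 at s₁ and s₃
  have es₁ : f s₁ - p s₁ = -1 := by
    rw [hfp s₁ (by linarith), hψs₁]
    exact cos_pi_mul_odd' 0 _ (by norm_num)
  have es₃ : f s₃ - p s₃ = -1 := by
    rw [hfp s₃ (by linarith), hψs₃]
    exact cos_pi_mul_odd' 6 _ (by norm_num)
  -- negativity of r at s₁, s₃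
  have hN1 : a + b * Real.cos (4*π*s₁) + c * Real.sin (4*π*s₁) < 0 := by
    have h := hneggen s₁ (by constructor <;> linarith) es₁
    rw [hr s₁] at h; exact h
  have hN3 : a + b * Real.cos (4*π*s₃) + c * Real.sin (4*π*s₃) < 0 := by
    have h := hneggen s₃ (by constructor <;> linarith) es₃
    rw [hr s₃] at h; exact h
  -- quadrant signs
  set X₁ := Real.cos (4*π*s₁) with hX₁d
  set Y₁ := Real.sin (4*π*s₁) with hY₁d
  set X₃ := Real.cos (4*π*s₃) with hX₃d
  set Y₃ := Real.sin (4*π*s₃) with hY₃d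
  have h4pi : (0:ℝ) < 4*π := by linarith
  have hθ₁u : 4*π*s₁ < π/2 := by
    have h := mul_lt_mul_of_pos_left hs₁r h4pi; linarith
  have hθ₁l : 0 < 4*π*s₁ := by
    have h := mul_lt_mul_of_pos_left hs₁l h4pi; linarith
  have hθ₃l : π < 4*π*s₃ := by
    have h := mul_lt_mul_of_pos_left hs₃l h4pi; linarith
  have hθ₃u : 4*π*s₃ < π + π/2 := by
    have h := mul_lt_mul_of_pos_left hs₃r h4pi; linarith
  have hX₁pos : 0 < X₁ := Real.cos_pos_of_mem_Ioo ⟨by linarith, hθ₁u⟩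
  have hY₁pos : 0 < Y₁ := Real.sin_pos_of_pos_of_lt_pi hθ₁l (by linarith)
  have hX₃neg : X₃ < 0 := Real.cos_neg_of_pi_div_two_lt_of_lt (by linarith) hθ₃u
  have hY₃neg : Y₃ < 0 := by
    have h1 : 0 < Real.sin (4*π*s₃ - π) :=
      Real.sin_pos_of_pos_of_lt_pi (by linarith) (by linarith)
    rw [Real.sin_sub_pi] at h1
    rw [hY₃d]; linarith
  have hu1 : X₁^2 + Y₁^2 = 1 := by
    rw [hX₁d, hY₁d, add_comm]; exact Real.sin_sq_add_cos_sq _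
  have hu3 : X₃^2 + Y₃^2 = 1 := by
    rw [hX₃d, hY₃d, add_comm]; exact Real.sin_sq_add_cos_sq _
  exact final_contradiction a b c X₁ Y₁ X₃ Y₃ hP0 hP1 hP2 hP3 hX₁pos hY₁pos hX₃neg hY₃neg
    hu1 hu3 hN1 hN3
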